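/- Let k be a field of prime characteristic p with p ≡ 2 (mod 3) and let R = k[x,y]/(x³ + y³). For q = p^e with e ∈ ℕ, consider the R-module (x^q, x y^q)/(x^{q+1}, x y^q), where (x^q, x y^q) and (x^{q+1}, x y^q) are the indicated ideals of R. Then ℓ_R((x^q, x y^q)/(x^{q+1}, x y^q)) = 2 if q ≡ 2 (mod 3) (i.e., e is odd) and = 1 if q ≡ 1 (mod 3) (i.e., e is even). -/

import Mathlib

set_option synthInstance.maxHeartbeats 1000000
set_option maxHeartbeats 1000000

open MvPolynomial

/-- The length of an `R`-module `M`: the Krull dimension of the lattice `Submodule R M`. -/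
noncomputable def moduleLength (R M : Type*) [Ring R] [AddCommGroup M] [Module R M] : ℕ∞ :=
  (Order.krullDim (Submodule R M)).unbotD 0

/-- The ring `R = k[x,y]/(x³ + y³)`, with `x = X 0` and `y = X 1`. -/
abbrev CubicQuot (K : Type*) [Field K] : Type _ :=
  MvPolynomial (Fin 2) K ⧸
    (Ideal.span {X 0 ^ 3 + X 1 ^ 3} : Ideal (MvPolynomial (Fin 2) K))

/-- The image of `x = X 0` in `k[x,y]/(x³ + y³)`. -/
noncomputable def xbar (K : Type*) [Field K] : CubicQuot K :=
  Ideal.Quotient.mk _ (X 0)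

/-- The image of `y = X 1` in `k[x,y]/(x³ + y³)`. -/
noncomputable def ybar (K : Type*) [Field K] : CubicQuot K :=
  Ideal.Quotient.mk _ (X 1)

lemma krullDim_eq_one_of_pair {α : Type*} [PartialOrder α] {a b : α} (hab : a < b)
    (h : ∀ c : α, c = a ∨ c = b) : Order.krullDim α = 1 := by
  have : Nonempty α := ⟨a⟩
  apply le_antisymm
  · rw [Order.krullDim_eq_iSup_length]
    rw [show (1 : WithBot ℕ∞) = ((1 : ℕ∞) : WithBot ℕ∞) by rfl, WithBot.coe_le_coe]
    refine iSup_le fun p => ?_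
    rw [show (1 : ℕ∞) = ((1 : ℕ) : ℕ∞) by rfl, Nat.cast_le]
    by_contra hlen
    push_neg at hlen
    have h01 : p.toFun ⟨0, by omega⟩ < p.toFun ⟨1, by omega⟩ := p.strictMono (by simp [Fin.lt_def])
    have h12 : p.toFun ⟨1, by omega⟩ < p.toFun ⟨2, by omega⟩ := p.strictMono (by simp [Fin.lt_def])
    rcases h (p.toFun ⟨0, by omega⟩) with h0 | h0 <;>
      rcases h (p.toFun ⟨1, by omega⟩) with h1 | h1 <;>
        rcases h (p.toFun ⟨2, by omega⟩) with h2 | h2 <;>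
          rw [h0, h1] at h01 <;> rw [h1, h2] at h12 <;>
          first
            | exact absurd h01 (lt_irrefl _)
            | exact absurd h12 (lt_irrefl _)
            | exact absurd (h01.trans h12) (lt_irrefl _)
  · have h1 := Order.LTSeries.length_le_krullDim (α := α) ⟨1, ![a, b], by
      intro i
      fin_cases i
      simpa using hab⟩
    simpa using h1

lemma krullDim_eq_two_of_triple {α : Type*} [PartialOrder α] {a b c : α} (hab : a < b)
    (hbc : b < c) (h : ∀ d : α, d = a ∨ d = b ∨ d = c) : Order.krullDim α = 2 := by
  have : Nonempty α := ⟨a⟩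
  apply le_antisymm
  · rw [Order.krullDim_eq_iSup_length]
    rw [show (2 : WithBot ℕ∞) = ((2 : ℕ∞) : WithBot ℕ∞) by rfl, WithBot.coe_le_coe]
    refine iSup_le fun p => ?_
    rw [show (2 : ℕ∞) = ((2 : ℕ) : ℕ∞) by rfl, Nat.cast_le]
    by_contra hlen
    push_neg at hlen
    have h01 : p.toFun ⟨0, by omega⟩ < p.toFun ⟨1, by omega⟩ := p.strictMono (by simp [Fin.lt_def])
    have h12 : p.toFun ⟨1, by omega⟩ < p.toFun ⟨2, by omega⟩ := p.strictMono (by simp [Fin.lt_def])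
    have h23 : p.toFun ⟨2, by omega⟩ < p.toFun ⟨3, by omega⟩ := p.strictMono (by simp [Fin.lt_def])
    rcases h (p.toFun ⟨0, by omega⟩) with h0 | h0 | h0 <;>
      rcases h (p.toFun ⟨1, by omega⟩) with h1 | h1 | h1 <;>
        rcases h (p.toFun ⟨2, by omega⟩) with h2 | h2 | h2 <;>
          rcases h (p.toFun ⟨3, by omega⟩) with h3 | h3 | h3 <;>
          rw [h0, h1] at h01 <;> rw [h1, h2] at h12 <;> rw [h2, h3] at h23 <;>
          first
            | exact absurd h01 (lt_irrefl _)
            | exact absurd h12 (lt_irrefl _)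
            | exact absurd h23 (lt_irrefl _)
            | exact absurd (h01.trans h12) (lt_irrefl _)
            | exact absurd (h12.trans h23) (lt_irrefl _)
            | exact absurd (h01.trans (h12.trans h23)) (lt_irrefl _)
  · have h1 := Order.LTSeries.length_le_krullDim (α := α) ⟨2, ![a, b, c], by
      intro i
      fin_cases i <;> simpa using (by first | exact hab | exact hbc)⟩
    simpa using h1

noncomputable section Aux

variable (K : Type*) [Field K]

/-- The cubic `Z³ + t³` over `K[t]`. -/
def fS : Polynomial (Polynomial K) := Polynomial.X ^ 3 + Polynomial.C (Polynomial.X ^ 3)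

lemma fS_monic : (fS K).Monic := by
  apply Polynomial.monic_X_pow_add
  simpa using (Polynomial.degree_C_le).trans_lt (by norm_num)

lemma fS_degree : (fS K).degree = 3 := by
  have h := fS_monic K
  have : (fS K).natDegree = 3 := by
    unfold fS
    compute_degree!
  rw [Polynomial.degree_eq_natDegree h.ne_zero, this]
  rfl

abbrev SRing := AdjoinRoot (fS K)

lemma root_cube : (AdjoinRoot.root (fS K)) ^ 3 =
    algebraMap (Polynomial K) (SRing K) (-(Polynomial.X ^ 3)) := by
  have h := AdjoinRoot.eval₂_root (fS K)
  unfold fS at h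
  rw [Polynomial.eval₂_add, Polynomial.eval₂_pow, Polynomial.eval₂_X, Polynomial.eval₂_C] at h
  rw [AdjoinRoot.algebraMap_eq, map_neg]
  unfold fS
  exact eq_neg_of_add_eq_zero_left h

/-- Ring map `k[x,y]/(x³+y³) → K[t][z]/(z³+t³)`, `x ↦ z`, `y ↦ t`. -/
def Xi : (MvPolynomial (Fin 2) K ⧸
    (Ideal.span {X 0 ^ 3 + X 1 ^ 3} : Ideal (MvPolynomial (Fin 2) K))) →+* SRing K := by
  refine Ideal.Quotient.lift _
    (MvPolynomial.eval₂Hom ((algebraMap (Polynomial K) (SRing K)).comp Polynomial.C)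
      ![AdjoinRoot.root (fS K), algebraMap (Polynomial K) (SRing K) Polynomial.X]) ?_
  intro a ha
  rw [Ideal.mem_span_singleton] at ha
  obtain ⟨b, rfl⟩ := ha
  rw [map_mul]
  convert zero_mul _
  rw [map_add, map_pow, map_pow, eval₂Hom_X', eval₂Hom_X']
  simp only [Matrix.cons_val_zero, Matrix.cons_val_one, Matrix.head_cons]
  rw [root_cube, ← map_pow, ← map_add, neg_add_cancel, map_zero]

lemma Xi_x : Xi K (Ideal.Quotient.mk _ (X 0)) = AdjoinRoot.root (fS K) := by
  unfold Xi
  rw [Ideal.Quotient.lift_mk, eval₂Hom_X']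
  simp

lemma Xi_y : Xi K (Ideal.Quotient.mk _ (X 1)) =
    algebraMap (Polynomial K) (SRing K) Polynomial.X := by
  unfold Xi
  rw [Ideal.Quotient.lift_mk, eval₂Hom_X']
  simp

lemma Xi_xbar : Xi K (xbar K) = AdjoinRoot.root (fS K) := by
  unfold xbar; exact Xi_x K

lemma Xi_ybar : Xi K (ybar K) = algebraMap (Polynomial K) (SRing K) Polynomial.X := by
  unfold ybar; exact Xi_y K

lemma Xi_algebraMap (c : K) : Xi K (algebraMap K _ c) =
    algebraMap (Polynomial K) (SRing K) (Polynomial.C c) := by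
  unfold Xi
  have : (algebraMap K (MvPolynomial (Fin 2) K ⧸
      (Ideal.span {X 0 ^ 3 + X 1 ^ 3} : Ideal (MvPolynomial (Fin 2) K))) c) =
      Ideal.Quotient.mk _ (MvPolynomial.C c) := rfl
  rw [this, Ideal.Quotient.lift_mk, eval₂Hom_C]
  rfl

/-- coordinate functions w.r.t. the basis `1, z, z²`. -/
def cf (j : ℕ) (s : SRing K) : Polynomial K :=
  (AdjoinRoot.modByMonicHom (fS_monic K) s).coeff j

lemma cf_add (j : ℕ) (s u : SRing K) : cf K j (s + u) = cf K j s + cf K j u := by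
  unfold cf; rw [map_add, Polynomial.coeff_add]

lemma cf_sub (j : ℕ) (s u : SRing K) : cf K j (s - u) = cf K j s - cf K j u := by
  unfold cf; rw [map_sub, Polynomial.coeff_sub]

lemma cf_smul (j : ℕ) (c : Polynomial K) (s : SRing K) :
    cf K j (algebraMap (Polynomial K) (SRing K) c * s) = c * cf K j s := by
  unfold cf
  rw [← Algebra.smul_def, map_smul, Polynomial.coeff_smul, smul_eq_mul]

lemma cf_pow (i j : ℕ) (hi : i < 3) :
    cf K j ((AdjoinRoot.root (fS K)) ^ i) = if i = j then 1 else 0 := by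
  unfold cf
  have : (AdjoinRoot.root (fS K)) ^ i = AdjoinRoot.mk (fS K) (Polynomial.X ^ i) := by
    rw [map_pow, AdjoinRoot.mk_X]
  rw [this, AdjoinRoot.modByMonicHom_mk]
  rw [(Polynomial.modByMonic_eq_self_iff (fS_monic K)).mpr]
  · rw [Polynomial.coeff_X_pow]
    rcases eq_or_ne i j with rfl | h
    · simp
    · simp [h, Ne.symm h]
  · rw [fS_degree, Polynomial.degree_X_pow]
    exact_mod_cast hi

lemma cf_one (j : ℕ) : cf K j (1 : SRing K) = if 0 = j then 1 else 0 := by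
  simpa using cf_pow K 0 j (by norm_num)


lemma fS_coeff (j : ℕ) : (fS K).coeff j =
    (if j = 3 then 1 else 0) + (if j = 0 then Polynomial.X ^ 3 else 0) := by
  unfold fS
  rw [Polynomial.coeff_add, Polynomial.coeff_X_pow, Polynomial.coeff_C]

lemma cf_root_mul (j : ℕ) (s : SRing K) :
    cf K j (AdjoinRoot.root (fS K) * s) =
      if j = 0 then -(Polynomial.X ^ 3) * cf K 2 s
      else if j = 1 then cf K 0 s
      else if j = 2 then cf K 1 s
      else 0 := by
  obtain ⟨G, rfl⟩ := AdjoinRoot.mk_surjective s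
  set r : Polynomial (Polynomial K) := G %ₘ (fS K) with hr
  have hrd : r.degree < 3 := by
    rw [hr, ← fS_degree K]
    exact Polynomial.degree_modByMonic_lt _ (fS_monic K)
  have hrc : ∀ m : ℕ, 3 ≤ m → r.coeff m = 0 := by
    intro m hm
    exact Polynomial.coeff_eq_zero_of_degree_lt (hrd.trans_le (by exact_mod_cast hm))
  have hmul : AdjoinRoot.root (fS K) * AdjoinRoot.mk (fS K) G =
      AdjoinRoot.mk (fS K) (Polynomial.X * G) := by
    rw [map_mul, AdjoinRoot.mk_X]
  have hkey : (Polynomial.X * G) %ₘ (fS K) =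
      Polynomial.X * r - Polynomial.C (r.coeff 2) * fS K := by
    refine (Polynomial.div_modByMonic_unique
      (Polynomial.C (r.coeff 2) + Polynomial.X * (G /ₘ fS K)) _ (fS_monic K) ⟨?_, ?_⟩).2
    · have hG : r + fS K * (G /ₘ fS K) = G := Polynomial.modByMonic_add_div G (fS K)
      linear_combination (Polynomial.X : Polynomial (Polynomial K)) * hG
    · rw [fS_degree, show (3 : WithBot ℕ) = ((3 : ℕ) : WithBot ℕ) from rfl,
        Polynomial.degree_lt_iff_coeff_zero]
      intro m hm'
      rw [Polynomial.coeff_sub, Polynomial.coeff_C_mul, fS_coeff]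
      rcases Nat.lt_or_ge 3 m with h3 | h3
      · obtain ⟨m', rfl⟩ : ∃ m', m = m' + 1 := ⟨m - 1, by omega⟩
        rw [Polynomial.coeff_X_mul, hrc m' (by omega)]
        simp only [Polynomial.coeff_sub, Polynomial.coeff_C_mul,
          if_neg (by omega : ¬ (m' + 1 = 3)), if_neg (by omega : ¬ (m' + 1 = 0))]
        simp
      · have : m = 3 := by omega
        subst this
        rw [show (3 : ℕ) = 2 + 1 from rfl, Polynomial.coeff_X_mul]
        simp
  have hco : ∀ j, cf K j (AdjoinRoot.root (fS K) * AdjoinRoot.mk (fS K) G) =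
      (Polynomial.X * r - Polynomial.C (r.coeff 2) * fS K).coeff j := by
    intro j
    rw [hmul]
    unfold cf
    rw [AdjoinRoot.modByMonicHom_mk, hkey]
  have hcf : ∀ i, cf K i (AdjoinRoot.mk (fS K) G) = r.coeff i := by
    intro i
    unfold cf
    rw [AdjoinRoot.modByMonicHom_mk]
  rw [hco]
  rcases j with _ | _ | _ | j
  · simp only [if_pos rfl]
    rw [Polynomial.coeff_sub, Polynomial.mul_coeff_zero, Polynomial.coeff_X_zero,
      Polynomial.coeff_C_mul, fS_coeff]
    simp [hcf]
    ring
  · rw [Polynomial.coeff_sub, Polynomial.coeff_X_mul, Polynomial.coeff_C_mul, fS_coeff]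
    simp [hcf]
  · rw [Polynomial.coeff_sub, (show (2:ℕ) = 1 + 1 from rfl), Polynomial.coeff_X_mul,
      Polynomial.coeff_C_mul, fS_coeff]
    simp [hcf]
  · rw [Polynomial.coeff_sub, (show j + 1 + 1 + 1 = (j + 1 + 1) + 1 from rfl),
      Polynomial.coeff_X_mul, Polynomial.coeff_C_mul, fS_coeff]
    rcases Nat.eq_zero_or_pos j with rfl | hj
    · simp [hcf]
    · rw [hrc (j + 1 + 1) (by omega)]
      simp [(by omega : ¬ (j + 1 + 1 + 1 = 3)), (by omega : ¬ (j + 1 + 1 + 1 = 0)), hj.ne']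

lemma cf_root0 (s : SRing K) :
    cf K 0 (AdjoinRoot.root (fS K) * s) = -(Polynomial.X ^ 3) * cf K 2 s := by
  rw [cf_root_mul]; simp

lemma cf_root1 (s : SRing K) :
    cf K 1 (AdjoinRoot.root (fS K) * s) = cf K 0 s := by
  rw [cf_root_mul]; simp

lemma cf_root2 (s : SRing K) :
    cf K 2 (AdjoinRoot.root (fS K) * s) = cf K 1 s := by
  rw [cf_root_mul]; simp

lemma root_pow_3m (m : ℕ) : (AdjoinRoot.root (fS K)) ^ (3 * m) =
    algebraMap (Polynomial K) (SRing K) ((-(Polynomial.X ^ 3)) ^ m) := by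
  rw [pow_mul, root_cube, map_pow]

end Aux

section CQ

variable (K : Type*) [Field K]

/-- divisibility of the second coordinate for ideal elements, even case. -/
lemma dvd_even (m : ℕ) (w : _) (hw : w ∈ Ideal.span {xbar K ^ (3*m+1+1), xbar K * ybar K ^ (3*m+1)}) :
    (Polynomial.X : Polynomial K) ^ (3*m+1) ∣ cf K 1 (Xi K w) := by
  obtain ⟨a, b, rfl⟩ := Ideal.mem_span_pair.mp hw
  rw [map_add, map_mul, map_mul, map_pow, map_mul, map_pow, Xi_xbar, Xi_ybar, cf_add]
  apply dvd_add
  · have h1 : Xi K a * AdjoinRoot.root (fS K) ^ (3*m+1+1) =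
        algebraMap (Polynomial K) (SRing K) ((-(Polynomial.X ^ 3)) ^ m) *
          (AdjoinRoot.root (fS K) * (AdjoinRoot.root (fS K) * Xi K a)) := by
      rw [show 3*m+1+1 = 3*m + 2 by ring, pow_add, root_pow_3m]
      ring
    rw [h1, cf_smul, cf_root1, cf_root0]
    have : (-(Polynomial.X ^ 3 : Polynomial K)) ^ m * (-(Polynomial.X ^ 3) * cf K 2 (Xi K a)) =
        Polynomial.X ^ (3*m+3) * ((-1) ^ (m+1) * cf K 2 (Xi K a)) := by ring
    rw [this]
    exact Dvd.dvd.mul_right (pow_dvd_pow _ (by omega)) _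
  · have h2 : Xi K b * (AdjoinRoot.root (fS K) *
        (algebraMap (Polynomial K) (SRing K) Polynomial.X) ^ (3*m+1)) =
        algebraMap (Polynomial K) (SRing K) (Polynomial.X ^ (3*m+1)) *
          (AdjoinRoot.root (fS K) * Xi K b) := by
      rw [map_pow]; ring
    rw [h2, cf_smul, cf_root1]
    exact dvd_mul_right _ _

/-- divisibility of the third coordinate for ideal elements, odd case. -/
lemma dvd_odd (m : ℕ) (w : _) (hw : w ∈ Ideal.span {xbar K ^ (3*m+2+1), xbar K * ybar K ^ (3*m+2)}) :
    (Polynomial.X : Polynomial K) ^ (3*m+2) ∣ cf K 2 (Xi K w) := by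
  obtain ⟨a, b, rfl⟩ := Ideal.mem_span_pair.mp hw
  rw [map_add, map_mul, map_mul, map_pow, map_mul, map_pow, Xi_xbar, Xi_ybar, cf_add]
  apply dvd_add
  · have h1 : Xi K a * AdjoinRoot.root (fS K) ^ (3*m+2+1) =
        algebraMap (Polynomial K) (SRing K) ((-(Polynomial.X ^ 3)) ^ (m+1)) * Xi K a := by
      rw [show 3*m+2+1 = 3*(m+1) by ring, root_pow_3m]
      ring
    rw [h1, cf_smul]
    have : (-(Polynomial.X ^ 3 : Polynomial K)) ^ (m+1) * cf K 2 (Xi K a) =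
        Polynomial.X ^ (3*m+3) * ((-1) ^ (m+1) * cf K 2 (Xi K a)) := by ring
    rw [this]
    exact Dvd.dvd.mul_right (pow_dvd_pow _ (by omega)) _
  · have h2 : Xi K b * (AdjoinRoot.root (fS K) *
        (algebraMap (Polynomial K) (SRing K) Polynomial.X) ^ (3*m+2)) =
        algebraMap (Polynomial K) (SRing K) (Polynomial.X ^ (3*m+2)) *
          (AdjoinRoot.root (fS K) * Xi K b) := by
      rw [map_pow]; ring
    rw [h2, cf_smul, cf_root2]
    exact dvd_mul_right _ _

lemma cf_even_val (m : ℕ) :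
    cf K 1 (Xi K (xbar K ^ (3*m+1))) = (-(Polynomial.X ^ 3 : Polynomial K)) ^ m := by
  rw [map_pow, Xi_xbar, pow_add, root_pow_3m, pow_one, cf_smul]
  rw [show (AdjoinRoot.root (fS K)) = (AdjoinRoot.root (fS K))^1 by ring, cf_pow K 1 1 (by omega)]
  simp

lemma cf_odd_val (m : ℕ) (c : K) :
    cf K 2 (Xi K (xbar K ^ (3*m+2) - algebraMap K (CubicQuot K) c * (ybar K * xbar K ^ (3*m+2))))
      = (-(Polynomial.X ^ 3 : Polynomial K)) ^ m * (1 - Polynomial.C c * Polynomial.X) := by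
  have hq : (AdjoinRoot.root (fS K)) ^ (3*m+2) =
      algebraMap (Polynomial K) (SRing K) ((-(Polynomial.X ^ 3)) ^ m) * (AdjoinRoot.root (fS K))^2 := by
    rw [pow_add, root_pow_3m]
  rw [map_sub, map_mul, map_mul, map_pow, Xi_xbar, Xi_ybar, Xi_algebraMap, cf_sub, hq]
  have h2 : algebraMap (Polynomial K) (SRing K) (Polynomial.C c) *
      (algebraMap (Polynomial K) (SRing K) Polynomial.X *
        (algebraMap (Polynomial K) (SRing K) ((-(Polynomial.X ^ 3)) ^ m) * (AdjoinRoot.root (fS K))^2)) =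
      algebraMap (Polynomial K) (SRing K) (Polynomial.C c * Polynomial.X * (-(Polynomial.X ^ 3)) ^ m) *
        (AdjoinRoot.root (fS K))^2 := by
    rw [map_mul, map_mul]; ring
  rw [h2, cf_smul, cf_smul, cf_pow K 2 2 (by omega)]
  simp
  ring

lemma cf_odd_valy (m : ℕ) :
    cf K 2 (Xi K (ybar K * xbar K ^ (3*m+2))) = Polynomial.X * (-(Polynomial.X ^ 3 : Polynomial K)) ^ m := by
  have hq : (AdjoinRoot.root (fS K)) ^ (3*m+2) =
      algebraMap (Polynomial K) (SRing K) ((-(Polynomial.X ^ 3)) ^ m) * (AdjoinRoot.root (fS K))^2 := by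
    rw [pow_add, root_pow_3m]
  rw [map_mul, map_pow, Xi_xbar, Xi_ybar, hq]
  have h2 : algebraMap (Polynomial K) (SRing K) Polynomial.X *
      (algebraMap (Polynomial K) (SRing K) ((-(Polynomial.X ^ 3)) ^ m) * (AdjoinRoot.root (fS K))^2) =
      algebraMap (Polynomial K) (SRing K) (Polynomial.X * (-(Polynomial.X ^ 3)) ^ m) *
        (AdjoinRoot.root (fS K))^2 := by
    rw [map_mul]; ring
  rw [h2, cf_smul, cf_pow K 2 2 (by omega)]
  simp


lemma not_mem_even (m : ℕ) :
    xbar K ^ (3*m+1) ∉ Ideal.span {xbar K ^ (3*m+1+1), xbar K * ybar K ^ (3*m+1)} := by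
  intro h
  have hd := dvd_even K m _ h
  rw [cf_even_val] at hd
  have h0 := Polynomial.X_pow_dvd_iff.mp hd (3*m) (by omega)
  rw [show (-(Polynomial.X ^ 3 : Polynomial K)) ^ m =
      Polynomial.C ((-1 : K)^m) * Polynomial.X^(3*m) by
    rw [map_pow, map_neg, map_one]; ring] at h0
  rw [Polynomial.coeff_C_mul, Polynomial.coeff_X_pow, if_pos rfl, mul_one] at h0
  exact pow_ne_zero m (neg_ne_zero.mpr one_ne_zero) h0

lemma not_mem_odd (m : ℕ) (c : K) :
    (xbar K ^ (3*m+2) - algebraMap K (CubicQuot K) c * (ybar K * xbar K ^ (3*m+2))) ∉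
      Ideal.span {xbar K ^ (3*m+2+1), xbar K * ybar K ^ (3*m+2)} := by
  intro h
  have hd := dvd_odd K m _ h
  rw [cf_odd_val] at hd
  have h0 := Polynomial.X_pow_dvd_iff.mp hd (3*m) (by omega)
  have hco : ((-(Polynomial.X ^ 3 : Polynomial K)) ^ m *
      (1 - Polynomial.C c * Polynomial.X)).coeff (3*m) = (-1 : K)^m := by
    rw [show (-(Polynomial.X ^ 3 : Polynomial K)) ^ m * (1 - Polynomial.C c * Polynomial.X) =
        Polynomial.C ((-1 : K)^m) * (Polynomial.X^(3*m) * (1 - Polynomial.C c * Polynomial.X)) by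
      rw [map_pow, map_neg, map_one]; ring]
    rw [Polynomial.coeff_C_mul]
    have h2 := Polynomial.coeff_X_pow_mul
      ((1 : Polynomial K) - Polynomial.C c * Polynomial.X) (3*m) 0
    rw [zero_add] at h2
    rw [h2]
    simp
  rw [hco] at h0
  exact pow_ne_zero m (neg_ne_zero.mpr one_ne_zero) h0

lemma not_mem_odd_y (m : ℕ) :
    ybar K * xbar K ^ (3*m+2) ∉ Ideal.span {xbar K ^ (3*m+2+1), xbar K * ybar K ^ (3*m+2)} := by
  intro h
  have hd := dvd_odd K m _ h
  rw [cf_odd_valy] at hd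
  have h0 := Polynomial.X_pow_dvd_iff.mp hd (3*m+1) (by omega)
  rw [show Polynomial.X * (-(Polynomial.X ^ 3 : Polynomial K)) ^ m =
      Polynomial.C ((-1 : K)^m) * Polynomial.X^(3*m+1) by
    rw [map_pow, map_neg, map_one]; ring] at h0
  rw [Polynomial.coeff_C_mul, Polynomial.coeff_X_pow, if_pos rfl, mul_one] at h0
  exact pow_ne_zero m (neg_ne_zero.mpr one_ne_zero) h0

end CQ

section ModPart

lemma moduleLength_congr {R M N : Type*} [CommRing R] [AddCommGroup M] [AddCommGroup N]
    [Module R M] [Module R N] (e : M ≃ₗ[R] N) : moduleLength R M = moduleLength R N := by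
  unfold moduleLength
  rw [Order.krullDim_eq_of_orderIso (Submodule.orderIsoMapComap e)]

lemma quot_span_pair_iso {R : Type*} [CommRing R] (u v : R) (J : Ideal R) (hv : v ∈ J) :
    Nonempty ((↥(Ideal.span {u, v}) ⧸ Submodule.comap (Ideal.span {u, v}).subtype J) ≃ₗ[R]
      (R ⧸ Submodule.comap (LinearMap.toSpanSingleton R R u) J)) := by
  have hu : u ∈ Ideal.span {u, v} := Ideal.subset_span (Set.mem_insert _ _)
  set J' := Submodule.comap (Ideal.span ({u, v} : Set R)).subtype J with hJ'
  set f : R →ₗ[R] (↥(Ideal.span {u, v}) ⧸ J') :=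
    (Submodule.mkQ J').comp (LinearMap.toSpanSingleton R (Ideal.span {u, v}) ⟨u, hu⟩) with hf
  have hker : LinearMap.ker f = Submodule.comap (LinearMap.toSpanSingleton R R u) J := by
    ext r
    simp only [hf, LinearMap.mem_ker, LinearMap.comp_apply, Submodule.mkQ_apply,
      Submodule.Quotient.mk_eq_zero, Submodule.mem_comap, LinearMap.toSpanSingleton_apply]
    rfl
  have hsurj : Function.Surjective f := by
    intro w
    obtain ⟨⟨i, hi⟩, rfl⟩ := Submodule.Quotient.mk_surjective _ w
    obtain ⟨a, b, hab⟩ := Ideal.mem_span_pair.mp hi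
    refine ⟨a, ?_⟩
    rw [hf]
    simp only [LinearMap.comp_apply, Submodule.mkQ_apply]
    rw [Submodule.Quotient.eq]
    refine Submodule.mem_comap.mpr ?_
    have heq : ((Ideal.span ({u, v} : Set R)).subtype)
        ((LinearMap.toSpanSingleton R ↥(Ideal.span {u, v}) ⟨u, hu⟩) a - ⟨i, hi⟩) = -(b * v) := by
      rw [LinearMap.toSpanSingleton_apply]
      simp only [map_sub, Submodule.coe_subtype, SetLike.val_smul, smul_eq_mul]
      rw [← hab]; ring
    rw [heq]
    exact neg_mem (Ideal.mul_mem_left _ b hv)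
  exact ⟨((Submodule.quotEquivOfEq _ _ hker.symm).trans
    (f.quotKerEquivOfSurjective hsurj)).symm⟩

end ModPart

section NFSec

variable (K : Type*) [Field K]

lemma NF_poly (P : MvPolynomial (Fin 2) K) :
    ∃ c d : K, P - (C c + C d * X 1) ∈
      Ideal.span {(X 0 : MvPolynomial (Fin 2) K), (X 1 : MvPolynomial (Fin 2) K)^2} := by
  induction P using MvPolynomial.induction_on with
  | C a => exact ⟨a, 0, by simp⟩
  | add p r hp hr =>
    obtain ⟨c1, d1, h1⟩ := hp
    obtain ⟨c2, d2, h2⟩ := hr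
    refine ⟨c1 + c2, d1 + d2, ?_⟩
    have heq : p + r - (C (c1+c2) + C (d1+d2) * X 1) =
        (p - (C c1 + C d1 * X 1)) + (r - (C c2 + C d2 * X 1)) := by
      rw [map_add, map_add]; ring
    rw [heq]; exact add_mem h1 h2
  | mul_X p i hp =>
    obtain ⟨c, d, h⟩ := hp
    fin_cases i
    · refine ⟨0, 0, ?_⟩
      show p * X 0 - (C (0:K) + C (0:K) * X 1) ∈ _
      have heq : p * X 0 - (C (0:K) + C (0:K) * X 1) = p * X 0 := by simp
      rw [heq]
      exact Ideal.mul_mem_left _ p (Ideal.subset_span (Set.mem_insert _ _))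
    · refine ⟨0, c, ?_⟩
      show p * X 1 - (C (0:K) + C c * X 1) ∈ _
      have heq : p * X 1 - (C (0:K) + C c * X 1) =
          C d * (X 1)^2 + (p - (C c + C d * X 1)) * X 1 := by
        rw [map_zero]; ring
      rw [heq]
      exact add_mem (Ideal.mul_mem_left _ _ (Ideal.subset_span (Set.mem_insert_of_mem _ rfl)))
        (Ideal.mul_mem_right _ _ h)

lemma algebraMap_mk (c : K) : algebraMap K (CubicQuot K) c =
    Ideal.Quotient.mk (Ideal.span {(X 0 : MvPolynomial (Fin 2) K) ^ 3 + X 1 ^ 3})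
      (C c) := rfl

lemma NF_cubic (r : CubicQuot K) :
    ∃ c d : K, r - (algebraMap K (CubicQuot K) c + algebraMap K (CubicQuot K) d * ybar K) ∈
      Ideal.span {xbar K, ybar K ^ 2} := by
  obtain ⟨P, rfl⟩ := Ideal.Quotient.mk_surjective r
  obtain ⟨c, d, h⟩ := NF_poly K P
  obtain ⟨a, b, hab⟩ := Ideal.mem_span_pair.mp h
  refine ⟨c, d, Ideal.mem_span_pair.mpr ⟨Ideal.Quotient.mk _ a, Ideal.Quotient.mk _ b, ?_⟩⟩
  have h2 := congrArg
    (Ideal.Quotient.mk (Ideal.span {(X 0 : MvPolynomial (Fin 2) K) ^ 3 + X 1 ^ 3})) hab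
  rw [map_add, map_mul, map_mul, map_pow, map_sub, map_add, map_mul] at h2
  rw [algebraMap_mk, algebraMap_mk]
  unfold xbar ybar
  exact h2

lemma cube_zero : xbar K ^ 3 + ybar K ^ 3 = 0 := by
  unfold xbar ybar
  rw [← map_pow, ← map_pow, ← map_add, Ideal.Quotient.eq_zero_iff_mem]
  exact Ideal.subset_span rfl

lemma y_mul_even (m : ℕ) : ybar K * xbar K ^ (3*m+1) =
    (-1 : CubicQuot K)^m * (xbar K * ybar K ^ (3*m+1)) := by
  have h3 : xbar K ^ 3 = -(ybar K ^ 3) := by linear_combination (cube_zero K)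
  calc ybar K * xbar K ^ (3*m+1) = (xbar K ^ 3)^m * (ybar K * xbar K) := by ring
  _ = (-(ybar K ^ 3))^m * (ybar K * xbar K) := by rw [h3]
  _ = (-1)^m * (xbar K * ybar K ^ (3*m+1)) := by ring

lemma y2_mul_odd (m : ℕ) : ybar K ^ 2 * xbar K ^ (3*m+2) =
    (-1 : CubicQuot K)^m * (xbar K * (xbar K * ybar K ^ (3*m+2))) := by
  have h3 : xbar K ^ 3 = -(ybar K ^ 3) := by linear_combination (cube_zero K)
  calc ybar K ^ 2 * xbar K ^ (3*m+2) = (xbar K ^ 3)^m * (ybar K ^ 2 * xbar K ^ 2) := by ring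
  _ = (-(ybar K ^ 3))^m * (ybar K ^ 2 * xbar K ^ 2) := by rw [h3]
  _ = (-1)^m * (xbar K * (xbar K * ybar K ^ (3*m+2))) := by ring

end NFSec

section Final

variable (K : Type*) [Field K]

lemma even_length (A : Ideal (CubicQuot K))
    (hx : xbar K ∈ A) (hy : ybar K ∈ A) (h1 : (1 : CubicQuot K) ∉ A) :
    moduleLength (CubicQuot K) (CubicQuot K ⧸ A) = 1 := by
  have hNF : ∀ r : CubicQuot K, ∃ c : K, r - algebraMap K (CubicQuot K) c ∈ A := by
    intro r
    obtain ⟨c, d, h⟩ := NF_cubic K r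
    refine ⟨c, ?_⟩
    have hsub : Ideal.span {xbar K, ybar K ^ 2} ≤ A := by
      rw [Ideal.span_le]
      intro z hz
      simp only [Set.mem_insert_iff, Set.mem_singleton_iff] at hz
      rcases hz with rfl | rfl
      · exact hx
      · exact Ideal.pow_mem_of_mem A hy 2 (by norm_num)
    have heq : r - algebraMap K (CubicQuot K) c =
        (r - (algebraMap K (CubicQuot K) c + algebraMap K (CubicQuot K) d * ybar K)) +
          algebraMap K (CubicQuot K) d * ybar K := by ring
    rw [heq]
    exact add_mem (hsub h) (Ideal.mul_mem_left _ _ hy)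
  have hclass : ∀ N : Submodule (CubicQuot K) (CubicQuot K ⧸ A), N = ⊥ ∨ N = ⊤ := by
    intro N
    by_cases hN : N = ⊥
    · exact Or.inl hN
    right
    have hex : ∃ n ∈ N, n ≠ 0 := by
      by_contra hc
      push_neg at hc
      exact hN ((Submodule.eq_bot_iff N).mpr hc)
    obtain ⟨n, hnN, hn0⟩ := hex
    obtain ⟨r, rfl⟩ := Submodule.Quotient.mk_surjective _ n
    obtain ⟨c, hc⟩ := hNF r
    have hmk : (Submodule.Quotient.mk r : CubicQuot K ⧸ A) =
        Submodule.Quotient.mk (algebraMap K (CubicQuot K) c) :=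
      (Submodule.Quotient.eq _).mpr hc
    have hc0 : c ≠ 0 := by
      rintro rfl
      apply hn0
      rw [hmk, map_zero]
      exact (Submodule.Quotient.mk_eq_zero _).mpr (zero_mem A)
    have h1N : (Submodule.Quotient.mk 1 : CubicQuot K ⧸ A) ∈ N := by
      have hsm := N.smul_mem (algebraMap K (CubicQuot K) c⁻¹) hnN
      rw [hmk, ← Submodule.Quotient.mk_smul] at hsm
      have heq : (algebraMap K (CubicQuot K) c⁻¹) • (algebraMap K (CubicQuot K) c) =
          (1 : CubicQuot K) := by
        rw [smul_eq_mul, ← map_mul, inv_mul_cancel₀ hc0, map_one]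
      rwa [heq] at hsm
    rw [Submodule.eq_top_iff']
    intro v
    obtain ⟨s, rfl⟩ := Submodule.Quotient.mk_surjective _ v
    have heq : (Submodule.Quotient.mk s : CubicQuot K ⧸ A) =
        s • Submodule.Quotient.mk 1 := by
      rw [← Submodule.Quotient.mk_smul, smul_eq_mul, mul_one]
    rw [heq]
    exact N.smul_mem s h1N
  have hbotne : (⊥ : Submodule (CubicQuot K) (CubicQuot K ⧸ A)) ≠ ⊤ := by
    intro hbt
    apply h1
    have htriv : (Submodule.Quotient.mk 1 : CubicQuot K ⧸ A) ∈ (⊤ : Submodule (CubicQuot K) (CubicQuot K ⧸ A)) := trivial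
    rw [← hbt, Submodule.mem_bot] at htriv
    exact (Submodule.Quotient.mk_eq_zero _).mp htriv
  have hdim := krullDim_eq_one_of_pair (lt_of_le_of_ne bot_le hbotne) hclass
  unfold moduleLength
  rw [hdim]
  rfl

lemma top_of_one_mem {A : Ideal (CubicQuot K)}
    (N : Submodule (CubicQuot K) (CubicQuot K ⧸ A))
    (h1N : (Submodule.Quotient.mk 1 : CubicQuot K ⧸ A) ∈ N) : N = ⊤ := by
  rw [Submodule.eq_top_iff']
  intro v
  obtain ⟨s, rfl⟩ := Submodule.Quotient.mk_surjective _ v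
  have heq : (Submodule.Quotient.mk s : CubicQuot K ⧸ A) =
      s • Submodule.Quotient.mk 1 := by
    rw [← Submodule.Quotient.mk_smul, smul_eq_mul, mul_one]
  rw [heq]
  exact N.smul_mem s h1N

set_option maxHeartbeats 2000000 in
lemma odd_length (A : Ideal (CubicQuot K))
    (hx : xbar K ∈ A) (hy2 : ybar K ^ 2 ∈ A) (hy : ybar K ∉ A)
    (h1c : ∀ c : K, (1 : CubicQuot K) - algebraMap K (CubicQuot K) c * ybar K ∉ A) :
    moduleLength (CubicQuot K) (CubicQuot K ⧸ A) = 2 := by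
  have hsub : Ideal.span {xbar K, ybar K ^ 2} ≤ A := by
    rw [Ideal.span_le]
    intro z hz
    simp only [Set.mem_insert_iff, Set.mem_singleton_iff] at hz
    rcases hz with rfl | rfl
    · exact hx
    · exact hy2
  have hNF : ∀ r : CubicQuot K, ∃ c d : K,
      r - (algebraMap K (CubicQuot K) c + algebraMap K (CubicQuot K) d * ybar K) ∈ A := by
    intro r
    obtain ⟨c, d, h⟩ := NF_cubic K r
    exact ⟨c, d, hsub h⟩
  set Y : CubicQuot K ⧸ A := Submodule.Quotient.mk (ybar K) with hY
  set SY : Submodule (CubicQuot K) (CubicQuot K ⧸ A) :=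
    Submodule.span (CubicQuot K) {Y} with hSY
  have hSY_elem : ∀ v ∈ SY, ∃ c : K, v = algebraMap K (CubicQuot K) c • Y := by
    intro v hv
    obtain ⟨r, hr⟩ := Submodule.mem_span_singleton.mp hv
    obtain ⟨c, d, hcd⟩ := hNF r
    refine ⟨c, ?_⟩
    rw [← hr, hY, ← Submodule.Quotient.mk_smul, ← Submodule.Quotient.mk_smul,
      Submodule.Quotient.eq]
    have heq : r • ybar K - algebraMap K (CubicQuot K) c • ybar K =
        (r - (algebraMap K (CubicQuot K) c + algebraMap K (CubicQuot K) d * ybar K)) * ybar K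
          + algebraMap K (CubicQuot K) d * ybar K ^ 2 := by
      simp only [smul_eq_mul]; ring
    rw [heq]
    exact add_mem (Ideal.mul_mem_right _ _ hcd) (Ideal.mul_mem_left _ _ hy2)
  have htop : ∀ N : Submodule (CubicQuot K) (CubicQuot K ⧸ A), ∀ r : CubicQuot K,
      (Submodule.Quotient.mk r : CubicQuot K ⧸ A) ∈ N → ∀ c d : K, c ≠ 0 →
      (r - (algebraMap K (CubicQuot K) c + algebraMap K (CubicQuot K) d * ybar K) ∈ A) →
      N = ⊤ := by
    intro N r hrN c d hc0 hcd
    set u : CubicQuot K := algebraMap K (CubicQuot K) (c⁻¹*c⁻¹) *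
      (algebraMap K (CubicQuot K) c - algebraMap K (CubicQuot K) d * ybar K) with hu
    have e2 : algebraMap K (CubicQuot K) (c⁻¹*c⁻¹) *
        (algebraMap K (CubicQuot K) c * algebraMap K (CubicQuot K) c) = 1 := by
      rw [← map_mul, ← map_mul, show c⁻¹*c⁻¹*(c*c) = 1 by field_simp, map_one]
    have e1 : algebraMap K (CubicQuot K) (c⁻¹*c⁻¹*(d*d)) =
        algebraMap K (CubicQuot K) (c⁻¹*c⁻¹) *
          (algebraMap K (CubicQuot K) d * algebraMap K (CubicQuot K) d) := by
      simp [map_mul]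
    have h2 : u * (algebraMap K (CubicQuot K) c + algebraMap K (CubicQuot K) d * ybar K) - 1 =
        - (algebraMap K (CubicQuot K) (c⁻¹*c⁻¹*(d*d)) * ybar K ^ 2) := by
      rw [hu, e1]
      linear_combination e2
    have hur : u * r - 1 ∈ A := by
      have h1 : u * r - 1 =
          u * (r - (algebraMap K (CubicQuot K) c + algebraMap K (CubicQuot K) d * ybar K))
          + (u * (algebraMap K (CubicQuot K) c + algebraMap K (CubicQuot K) d * ybar K) - 1) := by
        ring
      rw [h1, h2]
      exact add_mem (Ideal.mul_mem_left _ _ hcd) (neg_mem (Ideal.mul_mem_left _ _ hy2))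
    apply top_of_one_mem K N
    have hsm := N.smul_mem u hrN
    rw [← Submodule.Quotient.mk_smul] at hsm
    have hmk : (Submodule.Quotient.mk (u • r) : CubicQuot K ⧸ A) = Submodule.Quotient.mk 1 := by
      rw [Submodule.Quotient.eq]
      simpa [smul_eq_mul] using hur
    rwa [hmk] at hsm
  have hY0 : Y ≠ 0 := by
    intro h
    exact hy ((Submodule.Quotient.mk_eq_zero _).mp h)
  have hclass : ∀ N : Submodule (CubicQuot K) (CubicQuot K ⧸ A),
      N = ⊥ ∨ N = SY ∨ N = ⊤ := by
    intro N
    by_cases hN1 : ∃ n ∈ N, n ∉ SY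
    · right; right
      obtain ⟨n, hnN, hnSY⟩ := hN1
      obtain ⟨r, rfl⟩ := Submodule.Quotient.mk_surjective _ n
      obtain ⟨c, d, hcd⟩ := hNF r
      have hc0 : c ≠ 0 := by
        rintro rfl
        apply hnSY
        have hmk : (Submodule.Quotient.mk r : CubicQuot K ⧸ A) =
            algebraMap K (CubicQuot K) d • Y := by
          rw [hY, ← Submodule.Quotient.mk_smul, Submodule.Quotient.eq]
          simpa [smul_eq_mul] using hcd
        rw [hmk]
        exact SY.smul_mem _ (Submodule.mem_span_singleton_self _)
      exact htop N r hnN c d hc0 hcd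
    · push_neg at hN1
      have hNS : N ≤ SY := hN1
      by_cases hN0 : N = ⊥
      · exact Or.inl hN0
      right; left
      have hex : ∃ n ∈ N, n ≠ 0 := by
        by_contra hcn
        push_neg at hcn
        exact hN0 ((Submodule.eq_bot_iff N).mpr hcn)
      obtain ⟨n, hnN, hn0⟩ := hex
      obtain ⟨c, hc⟩ := hSY_elem n (hNS hnN)
      have hc0 : c ≠ 0 := by
        rintro rfl
        apply hn0
        rw [hc, map_zero]
        exact zero_smul (CubicQuot K) Y
      have hYN : Y ∈ N := by
        have hsm := N.smul_mem (algebraMap K (CubicQuot K) c⁻¹) hnN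
        rw [hc, hY, ← Submodule.Quotient.mk_smul, ← Submodule.Quotient.mk_smul] at hsm
        have h2 : (algebraMap K (CubicQuot K) c⁻¹) • ((algebraMap K (CubicQuot K) c) • ybar K)
            = ybar K := by
          rw [smul_eq_mul, smul_eq_mul, ← mul_assoc, ← map_mul, inv_mul_cancel₀ hc0,
            map_one, one_mul]
        rw [h2] at hsm
        rwa [hY]
      refine le_antisymm hNS ?_
      rw [hSY, Submodule.span_le, Set.singleton_subset_iff]
      exact hYN
  have hbot : (⊥ : Submodule (CubicQuot K) (CubicQuot K ⧸ A)) < SY := by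
    refine lt_of_le_of_ne bot_le fun h => ?_
    apply hY0
    have : Y ∈ SY := Submodule.mem_span_singleton_self _
    rw [← h, Submodule.mem_bot] at this
    exact this
  have hSYtop : SY < ⊤ := by
    refine lt_top_iff_ne_top.mpr fun h => ?_
    have h1SY : (Submodule.Quotient.mk 1 : CubicQuot K ⧸ A) ∈ SY := by
      rw [h]; trivial
    obtain ⟨c, hc⟩ := hSY_elem _ h1SY
    apply h1c c
    have hc' : (Submodule.Quotient.mk (1 : CubicQuot K) : CubicQuot K ⧸ A) =
        Submodule.Quotient.mk (algebraMap K (CubicQuot K) c * ybar K) := by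
      rw [hc, hY, ← Submodule.Quotient.mk_smul, smul_eq_mul]
    exact (Submodule.Quotient.eq _).mp hc'
  have hdim := krullDim_eq_two_of_triple hbot hSYtop hclass
  unfold moduleLength
  rw [hdim]
  rfl

set_option maxHeartbeats 2000000 in
lemma even_case (m : ℕ) :
    moduleLength (CubicQuot K)
      (↥(Ideal.span {xbar K ^ (3*m+1), xbar K * ybar K ^ (3*m+1)} : Ideal (CubicQuot K))
        ⧸ Submodule.comap
            (Ideal.span {xbar K ^ (3*m+1), xbar K * ybar K ^ (3*m+1)} : Ideal (CubicQuot K)).subtype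
            (Ideal.span {xbar K ^ (3*m+1+1), xbar K * ybar K ^ (3*m+1)} : Ideal (CubicQuot K)))
      = 1 := by
  have hv : xbar K * ybar K ^ (3*m+1) ∈
      (Ideal.span {xbar K ^ (3*m+1+1), xbar K * ybar K ^ (3*m+1)} : Ideal (CubicQuot K)) :=
    Ideal.subset_span (Set.mem_insert_of_mem _ rfl)
  obtain ⟨eiso⟩ := quot_span_pair_iso (xbar K ^ (3*m+1)) (xbar K * ybar K ^ (3*m+1)) _ hv
  rw [moduleLength_congr eiso]
  set A : Ideal (CubicQuot K) := Submodule.comap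
    (LinearMap.toSpanSingleton (CubicQuot K) (CubicQuot K) (xbar K ^ (3*m+1)))
    (Ideal.span {xbar K ^ (3*m+1+1), xbar K * ybar K ^ (3*m+1)}) with hA
  have memA : ∀ r : CubicQuot K, r ∈ A ↔
      r * xbar K ^ (3*m+1) ∈
        (Ideal.span {xbar K ^ (3*m+1+1), xbar K * ybar K ^ (3*m+1)} : Ideal (CubicQuot K)) := by
    intro r
    rw [hA, Submodule.mem_comap, LinearMap.toSpanSingleton_apply, smul_eq_mul]
  apply even_length
  · rw [memA]
    have heq : xbar K * xbar K ^ (3*m+1) = xbar K ^ (3*m+1+1) := by ring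
    rw [heq]
    exact Ideal.subset_span (Set.mem_insert _ _)
  · rw [memA, y_mul_even]
    exact Ideal.mul_mem_left _ _ hv
  · rw [memA, one_mul]
    exact not_mem_even K m
set_option maxHeartbeats 2000000 in
lemma odd_case (m : ℕ) :
    moduleLength (CubicQuot K)
      (↥(Ideal.span {xbar K ^ (3*m+2), xbar K * ybar K ^ (3*m+2)} : Ideal (CubicQuot K))
        ⧸ Submodule.comap
            (Ideal.span {xbar K ^ (3*m+2), xbar K * ybar K ^ (3*m+2)} : Ideal (CubicQuot K)).subtype
            (Ideal.span {xbar K ^ (3*m+2+1), xbar K * ybar K ^ (3*m+2)} : Ideal (CubicQuot K)))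
      = 2 := by
  have hv : xbar K * ybar K ^ (3*m+2) ∈
      (Ideal.span {xbar K ^ (3*m+2+1), xbar K * ybar K ^ (3*m+2)} : Ideal (CubicQuot K)) :=
    Ideal.subset_span (Set.mem_insert_of_mem _ rfl)
  obtain ⟨eiso⟩ := quot_span_pair_iso (xbar K ^ (3*m+2)) (xbar K * ybar K ^ (3*m+2)) _ hv
  rw [moduleLength_congr eiso]
  set A : Ideal (CubicQuot K) := Submodule.comap
    (LinearMap.toSpanSingleton (CubicQuot K) (CubicQuot K) (xbar K ^ (3*m+2)))
    (Ideal.span {xbar K ^ (3*m+2+1), xbar K * ybar K ^ (3*m+2)}) with hA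
  have memA : ∀ r : CubicQuot K, r ∈ A ↔
      r * xbar K ^ (3*m+2) ∈
        (Ideal.span {xbar K ^ (3*m+2+1), xbar K * ybar K ^ (3*m+2)} : Ideal (CubicQuot K)) := by
    intro r
    rw [hA, Submodule.mem_comap, LinearMap.toSpanSingleton_apply, smul_eq_mul]
  apply odd_length
  · rw [memA]
    have heq : xbar K * xbar K ^ (3*m+2) = xbar K ^ (3*m+2+1) := by ring
    rw [heq]
    exact Ideal.subset_span (Set.mem_insert _ _)
  · rw [memA, y2_mul_odd]
    exact Ideal.mul_mem_left _ _ (Ideal.mul_mem_left _ _ hv)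
  · rw [memA]
    intro h
    apply not_mem_odd_y K m
    have heq : ybar K * xbar K ^ (3*m+2) = ybar K * xbar K ^ (3*m+2) := rfl
    exact h
  · intro c
    rw [memA]
    intro h
    apply not_mem_odd K m c
    have heq : (1 - algebraMap K (CubicQuot K) c * ybar K) * xbar K ^ (3*m+2) =
        xbar K ^ (3*m+2) - algebraMap K (CubicQuot K) c * (ybar K * xbar K ^ (3*m+2)) := by
      ring
    rwa [heq] at h

end Final

lemma two_pow_mod3 (e : ℕ) : 2^e % 3 = if Even e then 1 else 2 := by
  induction e with
  | zero => simp
  | succ n ih =>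
    rw [pow_succ, Nat.mul_mod, ih]
    by_cases h : Even n
    · rw [if_pos h, if_neg (by simp [Nat.even_add_one, h])]
    · rw [if_neg h, if_pos (by simp [Nat.even_add_one, h])]


/-- Let `k` be a field of prime characteristic `p ≡ 2 (mod 3)`, let
`R = k[x,y]/(x³ + y³)` and write `x, y` for the images of the variables. For `q = p^e`,
`ℓ_R((x^q, x y^q)/(x^{q+1}, x y^q))` equals `2` if `e` is odd (`q ≡ 2 (mod 3)`) and `1` if
`e` is even (`q ≡ 1 (mod 3)`). -/
theorem length_ideal_quot_cubic (K : Type*) [Field K] (p : ℕ) (hp : p.Prime) [CharP K p]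
    (hp3 : p % 3 = 2) (e : ℕ) (q : ℕ) (hq : q = p ^ e) :
    (Odd e →
      moduleLength (CubicQuot K)
        (↥(Ideal.span {xbar K ^ q, xbar K * ybar K ^ q} : Ideal (CubicQuot K))
          ⧸ Submodule.comap
              (Ideal.span {xbar K ^ q, xbar K * ybar K ^ q} : Ideal (CubicQuot K)).subtype
              (Ideal.span {xbar K ^ (q + 1), xbar K * ybar K ^ q} : Ideal (CubicQuot K)))
        = 2)
    ∧ (Even e →
      moduleLength (CubicQuot K)
        (↥(Ideal.span {xbar K ^ q, xbar K * ybar K ^ q} : Ideal (CubicQuot K))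
          ⧸ Submodule.comap
              (Ideal.span {xbar K ^ q, xbar K * ybar K ^ q} : Ideal (CubicQuot K)).subtype
              (Ideal.span {xbar K ^ (q + 1), xbar K * ybar K ^ q} : Ideal (CubicQuot K)))
        = 1) := by
  constructor
  · intro he
    have hq3 : q % 3 = 2 := by
      rw [hq, Nat.pow_mod, hp3, two_pow_mod3, if_neg (Nat.not_even_iff_odd.mpr he)]
    obtain ⟨m, hm⟩ : ∃ m, q = 3*m+2 := ⟨q/3, by omega⟩
    rw [hm]
    exact odd_case K m
  · intro he
    have hq3 : q % 3 = 1 := by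
      rw [hq, Nat.pow_mod, hp3, two_pow_mod3, if_pos he]
    obtain ⟨m, hm⟩ : ∃ m, q = 3*m+1 := ⟨q/3, by omega⟩
    rw [hm]
    exact even_case K m
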